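/- Define q₃(x₅,x₆,x₇) = (x₅ + x₆ + x₇)x₇, q̄₂(x₅,x₆,x₇) = 2x₆x₇, and set q₂ = √2(q₃)_{x₇}x₄ + q̄₂, r₆ = 2(q₃)_{x₇}x₃ + 2(q₃)_{x₇x₇}x₄² + 2√2(q̄₂)_{x₇}x₄, r₇ = 2√2(q₃)_{x₇}x₄, r₅ = -(q₃)_{x₇}x₂ + √2(q₃)_{x₇x₇}x₃x₄ + (q̄₂)_{x₇}x₃ + (√2/3)(q₃)_{x₇x₇x₇}x₄³ + ((q̄₂)_{x₇x₇} - (q₃)_{x₆x₇})x₄² + (1/√2)(-0 - 0 + (q₃)_{x₅})x₄ (taking r̄₅ = r̄₆ = r̄₇ = 0). Then these equal the explicit polynomials q₂ = √2(x₅+x₆+2x₇)x₄ + 2x₆x₇, r₅ = -(x₅+x₆+2x₇)x₂ + 2√2 x₃x₄ + 2x₃x₆ - x₄² + (1/√2)x₄x₇, r₆ = 2(x₅+x₆+2x₇)x₃ + 4x₄² + 4√2 x₄x₆, r₇ = 2√2(x₅+x₆+2x₇)x₄, and they satisfy the differential system of Type I 4(b) with j=1: -2√2(r₅)_{x₂}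 = √2(r₆)_{x₃} = (r₇)_{x₄}, 2√2(r₅)_{x₃} = (r₆)_{x₄}, (r₆)_{x₃} = √2(q₂)_{x₄}, √2(r₅)_{x₄} = (r₆)_{x₇} - (r₇)_{x₆} + (q₃)_{x₅}, (r₆)_{x₄} = 2√2(q₂)_{x₇}, (r₇)_{x₄} = 2√2(q₃)_{x₇}. -/

import Mathlib

noncomputable section

/-- Partial derivative of `f` at `x` in the `i`-th coordinate direction. -/
def pd {n : ℕ} (i : Fin n) (f : (Fin n → ℝ) → ℝ) (x : Fin n → ℝ) : ℝ :=
  fderiv ℝ f x (Pi.single i 1)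

/- Coordinates on ℝ⁷: index i ↔ x_{i+1}. -/

def q₃16 (x : Fin 7 → ℝ) : ℝ := (x 4 + x 5 + x 6) * x 6
def q₂bar16 (x : Fin 7 → ℝ) : ℝ := 2 * x 5 * x 6

def q₂16 (x : Fin 7 → ℝ) : ℝ := Real.sqrt 2 * pd 6 q₃16 x * x 3 + q₂bar16 x
def r₆16 (x : Fin 7 → ℝ) : ℝ :=
  2 * pd 6 q₃16 x * x 2 + 2 * pd 6 (fun y => pd 6 q₃16 y) x * (x 3) ^ 2
    + 2 * Real.sqrt 2 * pd 6 q₂bar16 x * x 3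
def r₇16 (x : Fin 7 → ℝ) : ℝ := 2 * Real.sqrt 2 * pd 6 q₃16 x * x 3
def r₅16 (x : Fin 7 → ℝ) : ℝ :=
  -(pd 6 q₃16 x) * x 1 + Real.sqrt 2 * pd 6 (fun y => pd 6 q₃16 y) x * x 2 * x 3
    + pd 6 q₂bar16 x * x 2
    + (Real.sqrt 2 / 3) * pd 6 (fun y => pd 6 (fun z => pd 6 q₃16 z) y) x * (x 3) ^ 3
    + (pd 6 (fun y => pd 6 q₂bar16 y) x - pd 5 (fun y => pd 6 q₃16 y) x) * (x 3) ^ 2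
    + (1 / Real.sqrt 2) * pd 4 q₃16 x * x 3

namespace TypeI4b

def P (i : Fin 7) : (Fin 7 → ℝ) →L[ℝ] ℝ := ContinuousLinearMap.proj i

lemma hc (i : Fin 7) (x : Fin 7 → ℝ) :
    HasFDerivAt (fun y : Fin 7 → ℝ => y i) (P i) x :=
  (P i).hasFDerivAt

lemma pd_of (k : Fin 7) {f : (Fin 7 → ℝ) → ℝ} {x} {D : (Fin 7 → ℝ) →L[ℝ] ℝ}
    (h : HasFDerivAt f D x) : pd k f x = D (Pi.single k 1) := by
  rw [pd, h.fderiv]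

lemma q3pd6 (x : Fin 7 → ℝ) : pd 6 q₃16 x = x 4 + x 5 + 2 * x 6 := by
  rw [show q₃16 = fun x : Fin 7 → ℝ => (x 4 + x 5 + x 6) * x 6 from rfl,
    pd_of 6 ((((hc 4 x).fun_add (hc 5 x)).fun_add (hc 6 x)).fun_mul (hc 6 x))]
  simp [P, Pi.single_apply]; ring

lemma q3pd4 (x : Fin 7 → ℝ) : pd 4 q₃16 x = x 6 := by
  rw [show q₃16 = fun x : Fin 7 → ℝ => (x 4 + x 5 + x 6) * x 6 from rfl,
    pd_of 4 ((((hc 4 x).fun_add (hc 5 x)).fun_add (hc 6 x)).fun_mul (hc 6 x))]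
  simp [P, Pi.single_apply]

lemma q2barpd6 (x : Fin 7 → ℝ) : pd 6 q₂bar16 x = 2 * x 5 := by
  rw [show q₂bar16 = fun x : Fin 7 → ℝ => 2 * x 5 * x 6 from rfl,
    pd_of 6 (((hc 5 x).const_mul 2).fun_mul (hc 6 x))]
  simp [P, Pi.single_apply]

lemma fq3pd6 : (fun y => pd 6 q₃16 y) = fun y : Fin 7 → ℝ => y 4 + y 5 + 2 * y 6 :=
  funext q3pd6

lemma fq2barpd6 : (fun y => pd 6 q₂bar16 y) = fun y : Fin 7 → ℝ => 2 * y 5 :=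
  funext q2barpd6

lemma A1 (x : Fin 7 → ℝ) : pd 6 (fun y => pd 6 q₃16 y) x = 2 := by
  rw [fq3pd6, pd_of 6 (((hc 4 x).fun_add (hc 5 x)).fun_add ((hc 6 x).const_mul 2))]
  simp [P, Pi.single_apply]

lemma A2 (x : Fin 7 → ℝ) : pd 5 (fun y => pd 6 q₃16 y) x = 1 := by
  rw [fq3pd6, pd_of 5 (((hc 4 x).fun_add (hc 5 x)).fun_add ((hc 6 x).const_mul 2))]
  simp [P, Pi.single_apply]

lemma A3 (x : Fin 7 → ℝ) : pd 6 (fun y => pd 6 (fun z => pd 6 q₃16 z) y) x = 0 := by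
  have : (fun y => pd 6 (fun z => pd 6 q₃16 z) y) = fun _ : Fin 7 → ℝ => (2 : ℝ) :=
    funext A1
  rw [this, pd_of 6 (hasFDerivAt_const (2 : ℝ) x)]
  simp

lemma A4 (x : Fin 7 → ℝ) : pd 6 (fun y => pd 6 q₂bar16 y) x = 0 := by
  rw [fq2barpd6, pd_of 6 ((hc 5 x).const_mul 2)]
  simp [P, Pi.single_apply]

lemma Fq2 : q₂16 = fun x : Fin 7 → ℝ =>
    Real.sqrt 2 * (x 4 + x 5 + 2 * x 6) * x 3 + 2 * x 5 * x 6 := by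
  funext x
  rw [q₂16, q3pd6, q₂bar16]

lemma Fr5 : r₅16 = fun x : Fin 7 → ℝ =>
    -(x 4 + x 5 + 2 * x 6) * x 1 + 2 * Real.sqrt 2 * x 2 * x 3
      + 2 * x 2 * x 5 - x 3 * x 3 + (1 / Real.sqrt 2) * x 3 * x 6 := by
  funext x
  rw [r₅16, q3pd6, q3pd4, q2barpd6, A1, A2, A3, A4]
  ring

lemma Fr6 : r₆16 = fun x : Fin 7 → ℝ =>
    2 * (x 4 + x 5 + 2 * x 6) * x 2 + 4 * (x 3 * x 3)
      + 4 * Real.sqrt 2 * x 3 * x 5 := by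
  funext x
  rw [r₆16, q3pd6, q2barpd6, A1]
  ring

lemma Fr7 : r₇16 = fun x : Fin 7 → ℝ =>
    2 * Real.sqrt 2 * (x 4 + x 5 + 2 * x 6) * x 3 := by
  funext x
  rw [r₇16, q3pd6]

end TypeI4b

set_option maxHeartbeats 2000000 in
open TypeI4b in
theorem explicit_solution_type_I_4b_j1 :
    -- the explicit polynomial forms
    (∀ x : Fin 7 → ℝ, q₂16 x = Real.sqrt 2 * (x 4 + x 5 + 2 * x 6) * x 3 + 2 * x 5 * x 6) ∧
    (∀ x : Fin 7 → ℝ, r₅16 x = -(x 4 + x 5 + 2 * x 6) * x 1 + 2 * Real.sqrt 2 * x 2 * x 3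
      + 2 * x 2 * x 5 - (x 3) ^ 2 + (1 / Real.sqrt 2) * x 3 * x 6) ∧
    (∀ x : Fin 7 → ℝ, r₆16 x = 2 * (x 4 + x 5 + 2 * x 6) * x 2 + 4 * (x 3) ^ 2
      + 4 * Real.sqrt 2 * x 3 * x 5) ∧
    (∀ x : Fin 7 → ℝ, r₇16 x = 2 * Real.sqrt 2 * (x 4 + x 5 + 2 * x 6) * x 3) ∧
    -- the differential system of Type I 4(b), j = 1
    (∀ x, -2 * Real.sqrt 2 * pd 1 r₅16 x = Real.sqrt 2 * pd 2 r₆16 x) ∧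
    (∀ x, Real.sqrt 2 * pd 2 r₆16 x = pd 3 r₇16 x) ∧
    (∀ x, 2 * Real.sqrt 2 * pd 2 r₅16 x = pd 3 r₆16 x) ∧
    (∀ x, pd 2 r₆16 x = Real.sqrt 2 * pd 3 q₂16 x) ∧
    (∀ x, Real.sqrt 2 * pd 3 r₅16 x = pd 6 r₆16 x - pd 5 r₇16 x + pd 4 q₃16 x) ∧
    (∀ x, pd 3 r₆16 x = 2 * Real.sqrt 2 * pd 6 q₂16 x) ∧
    (∀ x, pd 3 r₇16 x = 2 * Real.sqrt 2 * pd 6 q₃16 x) := by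
  have h2 : Real.sqrt 2 ^ 2 = 2 := Real.sq_sqrt (by norm_num)
  have h3 : (Real.sqrt 2)⁻¹ = Real.sqrt 2 / 2 := by
    rw [eq_div_iff (by norm_num : (2:ℝ) ≠ 0), inv_mul_eq_iff_eq_mul₀ (by positivity), ← sq, h2]
  have ds : ∀ x : Fin 7 → ℝ, HasFDerivAt (fun y : Fin 7 → ℝ => y 4 + y 5 + 2 * y 6)
      (P 4 + P 5 + (2:ℝ) • P 6) x := fun x =>
    ((hc 4 x).add (hc 5 x)).add ((hc 6 x).const_mul 2)
  refine ⟨fun x => by rw [Fq2], fun x => by rw [Fr5]; ring,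
    fun x => by rw [Fr6]; ring, fun x => by rw [Fr7], ?_, ?_, ?_, ?_, ?_, ?_, ?_⟩
  · intro x
    rw [Fr5, Fr6,
      pd_of 1 ((((((ds x).fun_neg.fun_mul (hc 1 x)).fun_add
          (((hc 2 x).const_mul (2 * Real.sqrt 2)).fun_mul (hc 3 x))).fun_add
          (((hc 2 x).const_mul 2).fun_mul (hc 5 x))).fun_sub ((hc 3 x).fun_mul (hc 3 x))).fun_add
          (((hc 3 x).const_mul (1 / Real.sqrt 2)).fun_mul (hc 6 x))),
      pd_of 2 (((((ds x).const_mul 2).fun_mul (hc 2 x)).fun_add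
          (((hc 3 x).fun_mul (hc 3 x)).const_mul 4)).fun_add
          (((hc 3 x).const_mul (4 * Real.sqrt 2)).fun_mul (hc 5 x)))]
    simp [P, Pi.single_apply]
    ring
  · intro x
    rw [Fr6, Fr7,
      pd_of 2 (((((ds x).const_mul 2).fun_mul (hc 2 x)).fun_add
          (((hc 3 x).fun_mul (hc 3 x)).const_mul 4)).fun_add
          (((hc 3 x).const_mul (4 * Real.sqrt 2)).fun_mul (hc 5 x))),
      pd_of 3 (((ds x).const_mul (2 * Real.sqrt 2)).fun_mul (hc 3 x))]
    simp [P, Pi.single_apply]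
    ring
  · intro x
    rw [Fr5, Fr6,
      pd_of 2 ((((((ds x).fun_neg.fun_mul (hc 1 x)).fun_add
          (((hc 2 x).const_mul (2 * Real.sqrt 2)).fun_mul (hc 3 x))).fun_add
          (((hc 2 x).const_mul 2).fun_mul (hc 5 x))).fun_sub ((hc 3 x).fun_mul (hc 3 x))).fun_add
          (((hc 3 x).const_mul (1 / Real.sqrt 2)).fun_mul (hc 6 x))),
      pd_of 3 (((((ds x).const_mul 2).fun_mul (hc 2 x)).fun_add
          (((hc 3 x).fun_mul (hc 3 x)).const_mul 4)).fun_add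
          (((hc 3 x).const_mul (4 * Real.sqrt 2)).fun_mul (hc 5 x)))]
    simp [P, Pi.single_apply]
    linear_combination (4 * x 3) * h2
  · intro x
    rw [Fr6, Fq2,
      pd_of 2 (((((ds x).const_mul 2).fun_mul (hc 2 x)).fun_add
          (((hc 3 x).fun_mul (hc 3 x)).const_mul 4)).fun_add
          (((hc 3 x).const_mul (4 * Real.sqrt 2)).fun_mul (hc 5 x))),
      pd_of 3 ((((ds x).const_mul (Real.sqrt 2)).fun_mul (hc 3 x)).fun_add
          (((hc 5 x).const_mul 2).fun_mul (hc 6 x)))]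
    simp [P, Pi.single_apply]
    linear_combination (-(x 4 + x 5 + 2 * x 6)) * h2
  · intro x
    rw [Fr5, Fr6, Fr7,
      pd_of 3 ((((((ds x).fun_neg.fun_mul (hc 1 x)).fun_add
          (((hc 2 x).const_mul (2 * Real.sqrt 2)).fun_mul (hc 3 x))).fun_add
          (((hc 2 x).const_mul 2).fun_mul (hc 5 x))).fun_sub ((hc 3 x).fun_mul (hc 3 x))).fun_add
          (((hc 3 x).const_mul (1 / Real.sqrt 2)).fun_mul (hc 6 x))),
      pd_of 6 (((((ds x).const_mul 2).fun_mul (hc 2 x)).fun_add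
          (((hc 3 x).fun_mul (hc 3 x)).const_mul 4)).fun_add
          (((hc 3 x).const_mul (4 * Real.sqrt 2)).fun_mul (hc 5 x))),
      pd_of 5 (((ds x).const_mul (2 * Real.sqrt 2)).fun_mul (hc 3 x)), q3pd4]
    simp [P, Pi.single_apply, h3, one_div]
    linear_combination (2 * x 2 + x 6 / 2) * h2
  · intro x
    rw [Fr6, Fq2,
      pd_of 3 (((((ds x).const_mul 2).fun_mul (hc 2 x)).fun_add
          (((hc 3 x).fun_mul (hc 3 x)).const_mul 4)).fun_add
          (((hc 3 x).const_mul (4 * Real.sqrt 2)).fun_mul (hc 5 x))),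
      pd_of 6 ((((ds x).const_mul (Real.sqrt 2)).fun_mul (hc 3 x)).fun_add
          (((hc 5 x).const_mul 2).fun_mul (hc 6 x)))]
    simp [P, Pi.single_apply]
    linear_combination (-4 * x 3) * h2
  · intro x
    rw [Fr7, pd_of 3 (((ds x).const_mul (2 * Real.sqrt 2)).fun_mul (hc 3 x)), q3pd6]
    simp [P, Pi.single_apply]
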